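/- Let 𝒜 generate a monoid of Northcott type with exponents u_{ij} > 0 as in the matrix Φ. Then the catenary degree of ℕ𝒜 equals max( max{u_{n1}+u_{21}, u_{1,n-1}+u_{1n}}, max{u_{n2}+u_{32}, u_{21}+u_{2n}}, …, max{u_{n,n-1}+u_{1,n-1}, u_{n-1,n-2}+u_{n-1,n}}, max{∑_{i=1}^{n-1}u_{in}, ∑_{i=1}^{n-1}u_{ni}} ), i.e., the maximum over the Betti elements of the maximum of the lengths of their two factorizations. -/

import Mathlib

/-- `σ` : the cycle `(1 2 ⋯ n−1)` in 0-based indexing on `{0,…,n-2}`. -/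
def ntSig (n i : ℕ) : ℕ := if i = n - 2 then 0 else i + 1

/-- `σ⁻¹` in 0-based indexing on `{0,…,n-2}`. -/
def ntTau (n i : ℕ) : ℕ := if i = 0 then n - 2 else i - 1

/-- The factorization homomorphism `(v_1,…,v_n) ↦ ∑ v_i • a_i`. -/
def ntDeg {G : Type*} [AddCommGroup G] (n : ℕ) (a : Fin n → G) : (Fin n → ℕ) →+ G where
  toFun v := ∑ i, v i • a i
  map_zero' := by simp
  map_add' v w := by simp [add_smul, Finset.sum_add_distrib]

/-- The defining relations of a Northcott type monoid: the two factorizations of each Betti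
element, i.e. the two sides of the binomials `f_1,…,f_{n-1}` and `D` (0-based indices). -/
def ntRel (n : ℕ) (hn : 3 ≤ n) (u : ℕ → ℕ → ℕ) (v w : Fin n → ℕ) : Prop :=
  (∃ i : Fin (n - 1),
    v = Pi.single (⟨(i : ℕ), by have := i.isLt; omega⟩ : Fin n)
          (u (n - 1) i + u (ntSig n i) i) ∧
    w = Pi.single (⟨ntTau n i, by have := i.isLt; unfold ntTau; split <;> omega⟩ : Fin n)
          (u i (ntTau n i))
        + Pi.single (⟨n - 1, by omega⟩ : Fin n) (u i (n - 1)))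
  ∨ (v = (fun j : Fin n => if (j : ℕ) < n - 1 then u (n - 1) j else 0) ∧
      w = Pi.single (⟨n - 1, by omega⟩ : Fin n) (∑ i : Fin (n - 1), u (i : ℕ) (n - 1)))

/-- Positivity of the relevant exponents `u_{ij} > 0`. -/
def ntPos (n : ℕ) (u : ℕ → ℕ → ℕ) : Prop :=
  ∀ i, i < n - 1 → 0 < u (n - 1) i ∧ 0 < u i (n - 1) ∧ 0 < u i (ntTau n i) ∧ 0 < u (ntSig n i) i

/-- The distance between two factorizations. -/
def ntDist {n : ℕ} (v w : Fin n → ℕ) : ℕ :=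
  max (∑ i, (v i - min (v i) (w i))) (∑ i, (w i - min (v i) (w i)))

section Aux

open Relation

/-- An elementary step: translate a defining relation by `b`. -/
def ntStep (n : ℕ) (hn : 3 ≤ n) (u : ℕ → ℕ → ℕ) (x y : Fin n → ℕ) : Prop :=
  ∃ b p q, (ntRel n hn u p q ∨ ntRel n hn u q p) ∧ x = b + p ∧ y = b + q

lemma ntStep_symm {n : ℕ} {hn : 3 ≤ n} {u : ℕ → ℕ → ℕ} : Symmetric (ntStep n hn u) := by
  rintro x y ⟨b, p, q, h, rfl, rfl⟩
  exact ⟨b, q, p, h.symm, rfl, rfl⟩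

lemma ntStep_add {n : ℕ} {hn : 3 ≤ n} {u : ℕ → ℕ → ℕ} {x y : Fin n → ℕ} (c : Fin n → ℕ)
    (h : ntStep n hn u x y) : ntStep n hn u (x + c) (y + c) := by
  obtain ⟨b, p, q, h, rfl, rfl⟩ := h
  exact ⟨b + c, p, q, h, add_right_comm b p c, add_right_comm b q c⟩

/-- The congruence of chains of elementary steps. -/
def ntStepCon (n : ℕ) (hn : 3 ≤ n) (u : ℕ → ℕ → ℕ) : AddCon (Fin n → ℕ) where
  r := ReflTransGen (ntStep n hn u)
  iseqv := ⟨fun _ => .refl, fun h => (@ReflTransGen.stdSymm _ _ ⟨fun _ _ h => ntStep_symm h⟩).symm _ _ h,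
    fun h1 h2 => h1.trans h2⟩
  add' := by
    intro w x y z h1 h2
    have A : ReflTransGen (ntStep n hn u) (w + y) (x + y) :=
      h1.lift (· + y) fun _ _ h => ntStep_add y h
    have B : ReflTransGen (ntStep n hn u) (y + x) (z + x) :=
      h2.lift (· + x) fun _ _ h => ntStep_add x h
    rw [add_comm y x, add_comm z x] at B
    exact A.trans B

variable {G : Type*} [AddCommGroup G]

lemma ntDeg_eq_of_rel {n : ℕ} {hn : 3 ≤ n} {u : ℕ → ℕ → ℕ} {a : Fin n → G}
    (hker : AddCon.ker (ntDeg n a) = addConGen (ntRel n hn u))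
    {p q : Fin n → ℕ} (h : ntRel n hn u p q) : ntDeg n a p = ntDeg n a q := by
  have h1 : (addConGen (ntRel n hn u)) p q := AddConGen.Rel.of p q h
  rw [← hker] at h1
  exact (AddCon.ker_rel _).mp h1

lemma ntDeg_eq_of_step {n : ℕ} {hn : 3 ≤ n} {u : ℕ → ℕ → ℕ} {a : Fin n → G}
    (hker : AddCon.ker (ntDeg n a) = addConGen (ntRel n hn u))
    {x y : Fin n → ℕ} (h : ntStep n hn u x y) : ntDeg n a x = ntDeg n a y := by
  obtain ⟨b, p, q, hpq, rfl, rfl⟩ := h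
  rcases hpq with h | h
  · rw [map_add, map_add, ntDeg_eq_of_rel hker h]
  · rw [map_add, map_add, ntDeg_eq_of_rel hker h]

lemma ntRtg_of_deg_eq {n : ℕ} {hn : 3 ≤ n} {u : ℕ → ℕ → ℕ} {a : Fin n → G}
    (hker : AddCon.ker (ntDeg n a) = addConGen (ntRel n hn u))
    {x y : Fin n → ℕ} (h : ntDeg n a x = ntDeg n a y) :
    ReflTransGen (ntStep n hn u) x y := by
  have h1 : (AddCon.ker (ntDeg n a)) x y := (AddCon.ker_rel _).mpr h
  rw [hker] at h1
  exact (AddCon.addConGen_le (c := ntStepCon n hn u)).mpr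
    (fun p q hpq => ReflTransGen.single
      ⟨0, p, q, Or.inl hpq, (zero_add p).symm, (zero_add q).symm⟩) h1

lemma ntRtg_chain {n : ℕ} {hn : 3 ≤ n} {u : ℕ → ℕ → ℕ} {v w : Fin n → ℕ}
    (h : ReflTransGen (ntStep n hn u) v w) :
    ∃ (k : ℕ) (c : ℕ → Fin n → ℕ), c 0 = v ∧ c k = w ∧
      ∀ j < k, ntStep n hn u (c j) (c (j + 1)) := by
  induction h with
  | refl => exact ⟨0, fun _ => v, rfl, rfl, fun j h => absurd h (by omega)⟩
  | @tail b w hb hstep ih =>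
    obtain ⟨k, c, h0, hk, hs⟩ := ih
    refine ⟨k + 1, fun j => if j = k + 1 then w else c j, by simp [h0], by simp, fun j hj => ?_⟩
    rcases Nat.lt_or_ge j k with h | h
    · simpa [show j ≠ k + 1 by omega, show j + 1 ≠ k + 1 by omega, show j ≠ k by omega] using hs j h
    · have hjk : j = k := by omega
      subst hjk
      simpa [show j ≠ j + 1 by omega] using (hk ▸ hstep)

lemma ntDist_add_le {n : ℕ} (b p q : Fin n → ℕ) :
    ntDist (b + p) (b + q) ≤ max (∑ i, p i) (∑ i, q i) := by
  unfold ntDist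
  apply max_le_max <;> apply Finset.sum_le_sum <;> intro i _ <;>
    simp only [Pi.add_apply] <;> omega

lemma ntDist_comm {n : ℕ} (v w : Fin n → ℕ) : ntDist v w = ntDist w v := by
  unfold ntDist
  rw [max_comm]
  congr 1 <;> exact Finset.sum_congr rfl fun i _ => by omega

lemma ntDist_of_disjoint {n : ℕ} {v w : Fin n → ℕ} (h : ∀ j, v j = 0 ∨ w j = 0) :
    ntDist v w = max (∑ i, v i) (∑ i, w i) := by
  unfold ntDist
  congr 1 <;> refine Finset.sum_congr rfl fun j _ => ?_ <;> rcases h j with h0 | h0 <;>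
    rw [h0] <;> omega

lemma ntSum_single {n : ℕ} (c : Fin n) (x : ℕ) : ∑ j, Pi.single c x j = x := by
  rw [Finset.sum_pi_single']
  simp

lemma ntSum_VD {n : ℕ} (hn : 3 ≤ n) (u : ℕ → ℕ → ℕ) :
    ∑ j : Fin n, (if (j : ℕ) < n - 1 then u (n - 1) (j : ℕ) else 0)
      = ∑ i : Fin (n - 1), u (n - 1) (i : ℕ) := by
  obtain ⟨m, rfl⟩ : ∃ m, n = m + 1 := ⟨n - 1, by omega⟩
  rw [Fin.sum_univ_castSucc]
  simp

lemma ntTau_lt {n : ℕ} (hn : 3 ≤ n) {z : ℕ} (hz : z < n - 1) : ntTau n z < n - 1 := by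
  unfold ntTau; split <;> omega

lemma ntSig_ntTau {n : ℕ} (hn : 3 ≤ n) {z : ℕ} (hz : z < n - 1) : ntSig n (ntTau n z) = z := by
  unfold ntSig ntTau; split_ifs <;> omega

lemma ntTau_ne {n : ℕ} (hn : 3 ≤ n) {z : ℕ} (hz : z < n - 1) : ntTau n z ≠ z := by
  unfold ntTau; split <;> omega

lemma ntSum_pos {n : ℕ} (hn : 3 ≤ n) {u : ℕ → ℕ → ℕ} (hu : ntPos n u) :
    0 < ∑ j : Fin (n - 1), u (j : ℕ) (n - 1) :=
  Finset.sum_pos (fun j _ => (hu (j : ℕ) j.isLt).2.1) ⟨⟨0, by omega⟩, Finset.mem_univ _⟩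

lemma ntStep_closed {n : ℕ} {hn : 3 ≤ n} {u : ℕ → ℕ → ℕ} (hu : ntPos n u)
    {v w x y : Fin n → ℕ} (hvw : ntRel n hn u v w) (hx : x = v ∨ x = w)
    (hst : ntStep n hn u x y) : y = v ∨ y = w := by
  obtain ⟨b, p, q, hpq, hxe, rfl⟩ := hst
  rcases hvw with ⟨i, rfl, rfl⟩ | ⟨rfl, rfl⟩ <;>
    rcases hx with rfl | rfl <;>
    rcases hpq with hr | hr <;>
    rcases hr with ⟨j, rfl, rfl⟩ | ⟨rfl, rfl⟩
  -- x = L i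
  · -- p = L j : productive, y = R i
    have hji : (j : ℕ) = (i : ℕ) := by
      by_contra hne
      have h1 := congrFun hxe ⟨(j : ℕ), by have := j.isLt; omega⟩
      have hp1 := (hu (j : ℕ) j.isLt).1
      simp [Pi.add_apply, Pi.single_apply, Fin.mk.injEq, hne] at h1
      omega
    have hj : j = i := Fin.ext hji
    subst hj
    have hb : b = 0 := add_eq_right.mp hxe.symm
    right; rw [hb, zero_add]
  · -- p = VD : contradiction at coordinate z ≠ i, z < n-1
    exfalso
    obtain ⟨z, hz1, hz2⟩ : ∃ z, z < n - 1 ∧ z ≠ (i : ℕ) := by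
      rcases Nat.eq_zero_or_pos (i : ℕ) with h | h
      · exact ⟨1, by omega, by omega⟩
      · exact ⟨0, by omega, by omega⟩
    have h1 := congrFun hxe ⟨z, by omega⟩
    have hp1 := (hu z hz1).1
    simp [Pi.add_apply, Pi.single_apply, Fin.mk.injEq, hz1, hz2] at h1
    omega
  · -- p = R j : contradiction at coordinate n-1
    exfalso
    have h1 := congrFun hxe ⟨n - 1, by omega⟩
    have hp1 := (hu (j : ℕ) j.isLt).2.1
    have h2 : n - 1 ≠ ntTau n (j : ℕ) := by have := ntTau_lt hn j.isLt; omega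
    have h3 : n - 1 ≠ (i : ℕ) := by have := i.isLt; omega
    simp [Pi.add_apply, Pi.single_apply, Fin.mk.injEq, h2, h3] at h1
    omega
  · -- p = WD : contradiction at coordinate n-1
    exfalso
    have h1 := congrFun hxe ⟨n - 1, by omega⟩
    have hS := ntSum_pos hn hu
    have h3 : n - 1 ≠ (i : ℕ) := by have := i.isLt; omega
    simp [Pi.add_apply, Pi.single_apply, Fin.mk.injEq, h3] at h1
    omega
  -- x = R i
  · -- p = L j : contradiction
    exfalso
    have hj := j.isLt
    have hi := i.isLt
    have h1 := congrFun hxe ⟨(j : ℕ), by omega⟩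
    have hp1 := (hu (j : ℕ) hj).1
    have h3 : (j : ℕ) ≠ n - 1 := by omega
    simp only [Pi.add_apply, Pi.single_apply, Fin.mk.injEq, if_neg h3, eq_self_iff_true,
      if_true] at h1
    by_cases hc : (j : ℕ) = ntTau n (i : ℕ)
    · rw [if_pos hc] at h1
      have e : u (ntSig n (j : ℕ)) (j : ℕ) = u (i : ℕ) (ntTau n (i : ℕ)) := by
        rw [hc, ntSig_ntTau hn hi]
      rw [e] at h1
      omega
    · rw [if_neg hc] at h1
      omega
  · -- p = VD : contradiction at z < n-1, z ≠ τ i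
    exfalso
    have hi := i.isLt
    obtain ⟨z, hz1, hz2⟩ : ∃ z, z < n - 1 ∧ z ≠ ntTau n (i : ℕ) := by
      rcases Nat.eq_zero_or_pos (ntTau n (i : ℕ)) with h | h
      · exact ⟨1, by omega, by omega⟩
      · exact ⟨0, by omega, by omega⟩
    have h1 := congrFun hxe ⟨z, by omega⟩
    have hp1 := (hu z hz1).1
    have h3 : z ≠ n - 1 := by omega
    simp [Pi.add_apply, Pi.single_apply, Fin.mk.injEq, hz1, hz2, h3] at h1
    omega
  · -- p = R j : productive, y = L i
    have hi := i.isLt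
    have hj := j.isLt
    have hji : ntTau n (j : ℕ) = ntTau n (i : ℕ) := by
      by_contra hne
      have h1 := congrFun hxe ⟨ntTau n (j : ℕ), by have := ntTau_lt hn hj; omega⟩
      have hp1 := (hu (j : ℕ) hj).2.2.1
      have h3 : ntTau n (j : ℕ) ≠ n - 1 := by have := ntTau_lt hn hj; omega
      simp [Pi.add_apply, Pi.single_apply, Fin.mk.injEq, hne, h3] at h1
      omega
    have hji2 : (j : ℕ) = (i : ℕ) := by
      have e1 := ntSig_ntTau hn hj
      have e2 := ntSig_ntTau hn hi
      rw [hji] at e1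
      omega
    have hj2 : j = i := Fin.ext hji2
    subst hj2
    have hb : b = 0 := add_eq_right.mp hxe.symm
    left; rw [hb, zero_add]
  · -- p = WD : contradiction at n-1 using sum > u i (n-1)
    exfalso
    have hi := i.isLt
    have h1 := congrFun hxe ⟨n - 1, by omega⟩
    have h2 : n - 1 ≠ ntTau n (i : ℕ) := by have := ntTau_lt hn hi; omega
    simp [Pi.add_apply, Pi.single_apply, Fin.mk.injEq, h2] at h1
    obtain ⟨i', hi'⟩ : ∃ i' : Fin (n - 1), i' ≠ i := by
      rcases Nat.eq_zero_or_pos (i : ℕ) with h | h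
      · exact ⟨⟨1, by omega⟩, Fin.ne_of_val_ne (show (1 : ℕ) ≠ (i : ℕ) by omega)⟩
      · exact ⟨⟨0, by omega⟩, Fin.ne_of_val_ne (show (0 : ℕ) ≠ (i : ℕ) by omega)⟩
    have h3 : u (i : ℕ) (n - 1) + ∑ j ∈ Finset.univ.erase i, u (j : ℕ) (n - 1)
        = ∑ j : Fin (n - 1), u (j : ℕ) (n - 1) :=
      Finset.add_sum_erase _ (fun j : Fin (n - 1) => u (j : ℕ) (n - 1)) (Finset.mem_univ i)
    have h4 : 0 < ∑ j ∈ Finset.univ.erase i, u (j : ℕ) (n - 1) :=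
      Finset.sum_pos (fun j _ => (hu (j : ℕ) j.isLt).2.1)
        ⟨i', Finset.mem_erase.mpr ⟨hi', Finset.mem_univ i'⟩⟩
    omega
  -- x = VD
  · -- p = L j : contradiction
    exfalso
    have hj := j.isLt
    have h1 := congrFun hxe ⟨(j : ℕ), by omega⟩
    have hp1 := (hu (j : ℕ) hj).2.2.2
    simp [Pi.add_apply, Pi.single_apply, Fin.mk.injEq, hj] at h1
    omega
  · -- p = VD : productive
    have hb : b = 0 := add_eq_right.mp hxe.symm
    right; rw [hb, zero_add]
  · -- p = R j : contradiction at n-1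
    exfalso
    have hj := j.isLt
    have h1 := congrFun hxe ⟨n - 1, by omega⟩
    have hp1 := (hu (j : ℕ) hj).2.1
    have h2 : n - 1 ≠ ntTau n (j : ℕ) := by have := ntTau_lt hn hj; omega
    simp [Pi.add_apply, Pi.single_apply, Fin.mk.injEq, h2] at h1
    omega
  · -- p = WD : contradiction at n-1
    exfalso
    have h1 := congrFun hxe ⟨n - 1, by omega⟩
    have hS := ntSum_pos hn hu
    simp [Pi.add_apply, Pi.single_apply, Fin.mk.injEq] at h1
    omega
  -- x = WD
  · -- p = L j : contradiction
    exfalso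
    have hj := j.isLt
    have h1 := congrFun hxe ⟨(j : ℕ), by omega⟩
    have hp1 := (hu (j : ℕ) hj).1
    have h3 : (j : ℕ) ≠ n - 1 := by omega
    simp [Pi.add_apply, Pi.single_apply, Fin.mk.injEq, h3] at h1
    omega
  · -- p = VD : contradiction at 0
    exfalso
    have h1 := congrFun hxe ⟨0, by omega⟩
    have hp1 := (hu 0 (by omega)).1
    have h3 : (0 : ℕ) ≠ n - 1 := by omega
    simp [Pi.add_apply, Pi.single_apply, Fin.mk.injEq, h3, show (0:ℕ) < n - 1 by omega] at h1
    omega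
  · -- p = R j : contradiction at τ j
    exfalso
    have hj := j.isLt
    have h1 := congrFun hxe ⟨ntTau n (j : ℕ), by have := ntTau_lt hn hj; omega⟩
    have hp1 := (hu (j : ℕ) hj).2.2.1
    have h3 : ntTau n (j : ℕ) ≠ n - 1 := by have := ntTau_lt hn hj; omega
    simp [Pi.add_apply, Pi.single_apply, Fin.mk.injEq, h3] at h1
    omega
  · -- p = WD : productive
    have hb : b = 0 := add_eq_right.mp hxe.symm
    left; rw [hb, zero_add]

lemma ntSum_rel_le {n : ℕ} {hn : 3 ≤ n} {u : ℕ → ℕ → ℕ} {p q : Fin n → ℕ}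
    (h : ntRel n hn u p q) :
    max (∑ i, p i) (∑ i, q i)
      ≤ max (Finset.univ.sup fun i : Fin (n - 1) =>
          max (u (n - 1) i + u (ntSig n i) i) (u i (ntTau n i) + u i (n - 1)))
        (max (∑ i : Fin (n - 1), u (i : ℕ) (n - 1))
          (∑ i : Fin (n - 1), u (n - 1) i)) := by
  rcases h with ⟨i, rfl, rfl⟩ | ⟨rfl, rfl⟩
  · have hsup := Finset.le_sup (f := fun i : Fin (n - 1) =>
      max (u (n - 1) (i : ℕ) + u (ntSig n (i : ℕ)) (i : ℕ))
        (u (i : ℕ) (ntTau n (i : ℕ)) + u (i : ℕ) (n - 1))) (Finset.mem_univ i)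
    apply max_le
    · exact le_trans (le_of_eq (ntSum_single _ _))
        (le_trans (le_max_left _ _) (le_trans hsup (le_max_left _ _)))
    · have hsum : ∑ z : Fin n, (Pi.single (⟨ntTau n (i : ℕ), by
            have := ntTau_lt hn i.isLt; omega⟩ : Fin n) (u (i : ℕ) (ntTau n (i : ℕ)))
          + Pi.single (⟨n - 1, by omega⟩ : Fin n) (u (i : ℕ) (n - 1)) : Fin n → ℕ) z
          = u (i : ℕ) (ntTau n (i : ℕ)) + u (i : ℕ) (n - 1) := by
        simp only [Pi.add_apply]
        rw [Finset.sum_add_distrib, ntSum_single, ntSum_single]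
      exact le_trans (le_of_eq hsum)
        (le_trans (le_max_right _ _) (le_trans hsup (le_max_left _ _)))
  · apply max_le
    · exact le_trans (le_of_eq (ntSum_VD hn u))
        (le_trans (le_max_right _ _) (le_max_right _ _))
    · exact le_trans (le_of_eq (ntSum_single _ _))
        (le_trans (le_max_left _ _) (le_max_right _ _))

end Aux

/-- the catenary degree of a monoid of Northcott type is the maximum, over the
Betti elements, of the maximum of the lengths of their two factorizations, namely
`max(max{u_{ni}+u_{σ(i),i}, u_{i,σ⁻¹(i)}+u_{in}}_i, max{∑u_{in}, ∑u_{ni}})`. -/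
theorem northcott_catenary_degree {G : Type*} [AddCommGroup G] (n : ℕ) (hn : 3 ≤ n)
    (u : ℕ → ℕ → ℕ) (hu : ntPos n u) (a : Fin n → G)
    (hker : AddCon.ker (ntDeg n a) = addConGen (ntRel n hn u)) :
    IsLeast {N : ℕ | ∀ (s : G) (v w : Fin n → ℕ), ntDeg n a v = s → ntDeg n a w = s →
        ∃ (k : ℕ) (ch : Fin (k + 1) → Fin n → ℕ), ch 0 = v ∧ ch (Fin.last k) = w ∧
          (∀ j, ntDeg n a (ch j) = s) ∧
          ∀ j : Fin k, ntDist (ch j.castSucc) (ch j.succ) ≤ N}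
      (max (Finset.univ.sup fun i : Fin (n - 1) =>
          max (u (n - 1) i + u (ntSig n i) i) (u i (ntTau n i) + u i (n - 1)))
        (max (∑ i : Fin (n - 1), u (i : ℕ) (n - 1))
          (∑ i : Fin (n - 1), u (n - 1) i))) := by
  constructor
  · -- membership : chains of elementary moves realize the bound
    intro s v w hv hw
    obtain ⟨k, c, h0, hk, hs⟩ := ntRtg_chain (ntRtg_of_deg_eq hker (hv.trans hw.symm))
    have hdeg : ∀ t, t ≤ k → ntDeg n a (c t) = s := by
      intro t
      induction t with
      | zero => intro _; rw [h0, hv]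
      | succ t ih =>
        intro ht
        rw [← ntDeg_eq_of_step hker (hs t (by omega))]
        exact ih (by omega)
    refine ⟨k, fun j => c (j : ℕ), by simpa using h0, by simpa using hk,
      fun j => hdeg _ (by have := j.isLt; omega), fun j => ?_⟩
    obtain ⟨b, p, q, hpq, he1, he2⟩ := hs (j : ℕ) j.isLt
    have hle : ntDist (c ((j.castSucc : Fin (k + 1)) : ℕ)) (c ((j.succ : Fin (k + 1)) : ℕ))
        ≤ max (∑ i, p i) (∑ i, q i) := by
      rw [Fin.coe_castSucc, Fin.val_succ, he1, he2]
      exact ntDist_add_le b p q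
    refine le_trans hle ?_
    rcases hpq with h | h
    · exact ntSum_rel_le h
    · exact le_of_eq (max_comm _ _) |>.trans (ntSum_rel_le h)
  · -- lower bound
    intro N hN
    have key : ∀ v w : Fin n → ℕ, ntRel n hn u v w → v ≠ w → ntDist v w ≤ N := by
      intro v w hvw hne
      obtain ⟨k, ch, h0, hl, hdeg, hd⟩ :=
        hN (ntDeg n a v) v w rfl (ntDeg_eq_of_rel hker hvw).symm
      have hmem : ∀ z : Fin n → ℕ, Relation.ReflTransGen (ntStep n hn u) v z → z = v ∨ z = w := by
        intro z hr
        induction hr with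
        | refl => exact Or.inl rfl
        | tail hb hstep ih => exact ntStep_closed hu hvw ih hstep
      have hmem' : ∀ j : Fin (k + 1), ch j = v ∨ ch j = w :=
        fun j => hmem _ (ntRtg_of_deg_eq hker (hdeg j).symm)
      have hchange : ∃ j : Fin k, ch j.castSucc ≠ ch j.succ := by
        by_contra hc
        push_neg at hc
        have hall : ∀ j : Fin (k + 1), ch 0 = ch j := by
          intro j
          induction j using Fin.induction with
          | zero => rfl
          | succ j ih => exact ih.trans (hc j)
        exact hne ((h0.symm.trans (hall (Fin.last k))).trans hl)
      obtain ⟨j, hj⟩ := hchange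
      rcases hmem' j.castSucc with h1 | h1 <;> rcases hmem' j.succ with h2 | h2
      · exact absurd (h1.trans h2.symm) hj
      · rw [← h1, ← h2]; exact hd j
      · rw [ntDist_comm, ← h1, ← h2]; exact hd j
      · exact absurd (h1.trans h2.symm) hj
    apply max_le
    · apply Finset.sup_le
      intro i _
      have hi := i.isLt
      have hτlt := ntTau_lt hn hi
      have hτne := ntTau_ne hn hi
      have e1 : (i : ℕ) < n := by omega
      have e2 : ntTau n (i : ℕ) < n := by omega
      have e3 : n - 1 < n := by omega
      have hdisjA : ∀ z : Fin n,
          (Pi.single (⟨(i : ℕ), e1⟩ : Fin n)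
            (u (n - 1) (i : ℕ) + u (ntSig n (i : ℕ)) (i : ℕ)) : Fin n → ℕ) z = 0
          ∨ (Pi.single (⟨ntTau n (i : ℕ), e2⟩ : Fin n) (u (i : ℕ) (ntTau n (i : ℕ)))
              + Pi.single (⟨n - 1, e3⟩ : Fin n) (u (i : ℕ) (n - 1)) : Fin n → ℕ) z = 0 := by
        intro z
        by_cases hz : z = (⟨(i : ℕ), e1⟩ : Fin n)
        · right
          subst hz
          simp [Pi.add_apply, Pi.single_apply, Fin.mk.injEq, Ne.symm hτne,
            show (i : ℕ) ≠ n - 1 by omega]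
        · left
          exact Pi.single_eq_of_ne hz _
      have hneA : (Pi.single (⟨(i : ℕ), e1⟩ : Fin n)
            (u (n - 1) (i : ℕ) + u (ntSig n (i : ℕ)) (i : ℕ)) : Fin n → ℕ)
          ≠ (Pi.single (⟨ntTau n (i : ℕ), e2⟩ : Fin n) (u (i : ℕ) (ntTau n (i : ℕ)))
              + Pi.single (⟨n - 1, e3⟩ : Fin n) (u (i : ℕ) (n - 1)) : Fin n → ℕ) := by
        intro hEq
        have h1 := congrFun hEq ⟨(i : ℕ), e1⟩
        have hp := (hu (i : ℕ) hi).1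
        simp [Pi.add_apply, Pi.single_apply, Fin.mk.injEq, Ne.symm hτne,
          show (i : ℕ) ≠ n - 1 by omega] at h1
        omega
      have key' := key _ _ (Or.inl ⟨i, rfl, rfl⟩) hneA
      have hEqA : ntDist
            (Pi.single (⟨(i : ℕ), e1⟩ : Fin n)
              (u (n - 1) (i : ℕ) + u (ntSig n (i : ℕ)) (i : ℕ)) : Fin n → ℕ)
            (Pi.single (⟨ntTau n (i : ℕ), e2⟩ : Fin n) (u (i : ℕ) (ntTau n (i : ℕ)))
              + Pi.single (⟨n - 1, e3⟩ : Fin n) (u (i : ℕ) (n - 1)) : Fin n → ℕ)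
          = max (u (n - 1) (i : ℕ) + u (ntSig n (i : ℕ)) (i : ℕ))
              (u (i : ℕ) (ntTau n (i : ℕ)) + u (i : ℕ) (n - 1)) := by
        rw [ntDist_of_disjoint hdisjA]
        congr 1
        · exact ntSum_single _ _
        · simp only [Pi.add_apply]
          rw [Finset.sum_add_distrib, ntSum_single, ntSum_single]
      exact le_trans (le_of_eq hEqA.symm) key'
    · have e3 : n - 1 < n := by omega
      have hdisjD : ∀ z : Fin n,
          (fun j : Fin n => if (j : ℕ) < n - 1 then u (n - 1) (j : ℕ) else 0) z = 0
          ∨ (Pi.single (⟨n - 1, e3⟩ : Fin n)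
              (∑ i : Fin (n - 1), u (i : ℕ) (n - 1)) : Fin n → ℕ) z = 0 := by
        intro z
        by_cases hz : (z : ℕ) < n - 1
        · right
          exact Pi.single_eq_of_ne (Fin.ne_of_val_ne (show (z : ℕ) ≠ n - 1 by omega)) _
        · left
          simp [hz]
      have hneD : (fun j : Fin n => if (j : ℕ) < n - 1 then u (n - 1) (j : ℕ) else 0)
          ≠ Pi.single (⟨n - 1, e3⟩ : Fin n) (∑ i : Fin (n - 1), u (i : ℕ) (n - 1)) := by
        intro hEq
        have h1 := congrFun hEq ⟨0, by omega⟩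
        have hp := (hu 0 (by omega)).1
        simp [Pi.single_apply, Fin.mk.injEq, show (0 : ℕ) ≠ n - 1 by omega,
          show (0 : ℕ) < n - 1 by omega] at h1
        omega
      have key' := key _ _ (Or.inr ⟨rfl, rfl⟩) hneD
      have hEqD : ntDist
            (fun j : Fin n => if (j : ℕ) < n - 1 then u (n - 1) (j : ℕ) else 0)
            (Pi.single (⟨n - 1, e3⟩ : Fin n) (∑ i : Fin (n - 1), u (i : ℕ) (n - 1)))
          = max (∑ i : Fin (n - 1), u (n - 1) (i : ℕ))
              (∑ i : Fin (n - 1), u (i : ℕ) (n - 1)) := by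
        rw [ntDist_of_disjoint hdisjD]
        congr 1
        · exact ntSum_VD hn u
        · exact ntSum_single _ _
      have key'' := le_trans (le_of_eq hEqD.symm) key'
      exact max_le (le_trans (le_max_right _ _) key'') (le_trans (le_max_left _ _) key'')
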